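/- (Theorem 2) In the setup below, assume f is concave on ℝ₊ⁿ and that there exists a function f* : ℝⁿ → ℝ that is monotone, subadditive and concave on all of ℝⁿ and satisfies f*(x) = f(x) for all x ∈ ℝ₊ⁿ. Then for every S ⊆ {1,…,n} with |S| ≤ k: u(S) ≥ (1/2)·(1−ε)^{k−1}·(1−Δ/ε)·v(S) and u(S) ≤ 2·(1 + a·k/(ε−Δ)) / ((1−ε)^k·(1−Δ/ε)) · v(S). -/

import Mathlib

open MeasureTheory ProbabilityTheory

/-- For a subset `S` of coordinates, `mask S x` is the vector agreeing with `x` on `S`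
and equal to `0` outside `S`. -/
def mask {n : ℕ} (S : Finset (Fin n)) (x : Fin n → ℝ) : Fin n → ℝ :=
  fun i => if i ∈ S then x i else 0

set_option maxHeartbeats 1600000 in
/-- Theorem 2: for a monotone subadditive concave `f` on the nonnegative orthant
admitting a monotone, subadditive, concave extension to all of `ℝⁿ`, the sketch
`v(S) = E[f(Y_S)]` satisfies
`(1/2)(1−ε)^{k−1}(1−Δ/ε) v(S) ≤ u(S) ≤ 2(1 + a·k/(ε−Δ))/((1−ε)^k (1−Δ/ε)) v(S)`
for all sets `S` with `|S| ≤ k`. -/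
theorem sketch_extendable_concave_approx
    {Ωs : Type*} [MeasurableSpace Ωs] (μ : Measure Ωs) [IsProbabilityMeasure μ]
    {n : ℕ} (hn : 1 ≤ n)
    (X : Fin n → Ωs → ℝ)
    (hX_meas : ∀ i, Measurable (X i))
    (hX_nonneg : ∀ i ω, 0 ≤ X i ω)
    (hX_indep : iIndepFun X μ)
    (f : (Fin n → ℝ) → ℝ)
    (hf_meas : Measurable f)
    (hf_nonneg : ∀ x : Fin n → ℝ, 0 ≤ x → 0 ≤ f x)
    (hf_mono : ∀ x y : Fin n → ℝ, 0 ≤ x → x ≤ y → f x ≤ f y)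
    (hf_subadd : ∀ x y : Fin n → ℝ, 0 ≤ x → 0 ≤ y → f (x + y) ≤ f x + f y)
    (hf_conc : ConcaveOn ℝ {x : Fin n → ℝ | 0 ≤ x} f)
    (hf_ext : ∃ fstar : (Fin n → ℝ) → ℝ, Monotone fstar ∧
      (∀ x y : Fin n → ℝ, fstar (x + y) ≤ fstar x + fstar y) ∧
      ConcaveOn ℝ Set.univ fstar ∧
      ∀ x : Fin n → ℝ, 0 ≤ x → fstar x = f x)
    (k : ℕ) (hk : 1 ≤ k)
    (ε Δ : ℝ) (hε : ε ∈ Set.Ioo (0 : ℝ) 1) (hΔ : Δ ∈ Set.Ico (0 : ℝ) ε)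
    (τ : Fin n → ℝ) (hτ : ∀ i, 0 ≤ τ i)
    (hquant : ∀ i, 1 - ε ≤ (μ {ω | X i ω ≤ τ i}).toReal ∧
      (μ {ω | X i ω ≤ τ i}).toReal ≤ 1 - ε + Δ)
    (H : Fin n → ℝ)
    (hH : ∀ i, H i = (∫ ω in {ω | τ i < X i ω}, f (Pi.single i (X i ω)) ∂μ) /
      (μ {ω | τ i < X i ω}).toReal)
    (hH_int : ∀ i, Integrable (fun ω => f (Pi.single i (X i ω))) μ)
    (cst : Fin n → ℝ) (hcst : ∀ i, τ i < cst i)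
    (hcstH : ∀ i, f (Pi.single i (cst i)) = H i)
    (Xhat : Fin n → Ωs → ℝ)
    (hXhat : ∀ i ω, Xhat i ω = if X i ω ≤ τ i then X i ω else cst i)
    (a : ℝ) (ha : a ∈ Set.Icc (0 : ℝ) 1)
    (Xtil : Fin n → Ωs → ℝ)
    (hXtil : ∀ i ω, Xtil i ω = if a * τ i < Xhat i ω then Xhat i ω else 0)
    (Y : Fin n → Ωs → ℝ)
    (hY : ∀ i ω, (1 - ε) * Xtil i ω ≤ Y i ω ∧ Y i ω ≤ Xtil i ω)
    (u v : Finset (Fin n) → ℝ)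
    (hu : ∀ S, u S = ∫ ω, f (mask S (fun i => X i ω)) ∂μ)
    (hv : ∀ S, v S = ∫ ω, f (mask S (fun i => Y i ω)) ∂μ)
    (hu_int : ∀ S : Finset (Fin n),
      Integrable (fun ω => f (mask S (fun i => X i ω))) μ)
    (hv_int : ∀ S : Finset (Fin n),
      Integrable (fun ω => f (mask S (fun i => Y i ω))) μ) :
    ∀ S : Finset (Fin n), S.card ≤ k →
      (1 / 2) * (1 - ε) ^ (k - 1) * (1 - Δ / ε) * v S ≤ u S ∧
      u S ≤ 2 * (1 + a * k / (ε - Δ)) / ((1 - ε) ^ k * (1 - Δ / ε)) * v S := by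
  classical
  obtain ⟨F, hFmono, hFsub, hFconc, hFeq⟩ := hf_ext
  obtain ⟨hε0, hε1⟩ := hε
  obtain ⟨hΔ0, hΔε⟩ := hΔ
  obtain ⟨ha0, ha1⟩ := ha
  have hP0 : (0:ℝ) < 1 - ε := by linarith
  have hP1 : (1:ℝ) - ε ≤ 1 := by linarith
  have he0 : (0:ℝ) < ε - Δ := by linarith
  have hr0 : (0:ℝ) < 1 - Δ / ε := by
    have h1 : Δ / ε < 1 := (div_lt_one hε0).mpr hΔε
    linarith
  have hr1 : 1 - Δ / ε ≤ 1 := by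
    have : 0 ≤ Δ / ε := div_nonneg hΔ0 hε0.le
    linarith
  have hf0 : 0 ≤ f 0 := hf_nonneg 0 le_rfl
  have hkR : (1:ℝ) ≤ (k:ℝ) := by exact_mod_cast hk
  have hKk0 : (0:ℝ) < (1-ε)^k := pow_pos hP0 k
  have hK10 : (0:ℝ) < (1-ε)^(k-1) := pow_pos hP0 _
  have hK1le : (1-ε)^(k-1) ≤ 1 := pow_le_one₀ hP0.le hP1
  have hKkle : (1-ε)^k ≤ 1 := pow_le_one₀ hP0.le hP1
  have hKksplit : (1-ε)^k = (1-ε) * (1-ε)^(k-1) := by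
    conv_lhs => rw [show k = 1 + (k-1) by omega]
    rw [pow_add, pow_one]
  have hKkleP : (1-ε)^k ≤ 1-ε := by
    rw [hKksplit]; nlinarith [hK1le, hP0]
  -- elementary pointwise helpers
  have hsingle_nonneg : ∀ (i : Fin n) (c : ℝ), 0 ≤ c → (0 : Fin n → ℝ) ≤ Pi.single i c := by
    intro i c hc j
    rcases eq_or_ne j i with rfl | h
    · simpa using hc
    · simp [Pi.single_eq_of_ne h]
  have hsingle_le : ∀ (i : Fin n) (c d : ℝ), 0 ≤ c → c ≤ d →
      Pi.single i c ≤ Pi.single (M := fun _ => ℝ) i d := by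
    intro i c d _ h j
    rcases eq_or_ne j i with rfl | hji
    · simpa using h
    · simp [Pi.single_eq_of_ne hji]
  have hmask_nonneg : ∀ (s : Finset (Fin n)) (z : Fin n → ℝ), (∀ j, 0 ≤ z j) →
      (0 : Fin n → ℝ) ≤ mask s z := by
    intro s z hz j
    by_cases h : j ∈ s <;> simp [mask, h, hz j]
  -- the concavity ray lemma
  have hray : ∀ (x : Fin n → ℝ), (0:Fin n → ℝ) ≤ x → ∀ t : ℝ, 0 ≤ t → t ≤ 1 →
      t * f x ≤ f (t • x) := by
    intro x hx t ht0 ht1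
    have hxm : x ∈ {y : Fin n → ℝ | 0 ≤ y} := hx
    have h0m : (0:Fin n → ℝ) ∈ {y : Fin n → ℝ | 0 ≤ y} := by
      rw [Set.mem_setOf_eq]
    have hcc := hf_conc.2 hxm h0m ht0 (by linarith : (0:ℝ) ≤ 1 - t) (by ring)
    rw [smul_zero, add_zero, smul_eq_mul, smul_eq_mul] at hcc
    nlinarith [mul_nonneg (by linarith : (0:ℝ) ≤ 1 - t) hf0]
  -- the three-point concavity lemma using the extension fstar
  have hC2 : ∀ x d : Fin n → ℝ, (0:Fin n→ℝ) ≤ x → (0:Fin n→ℝ) ≤ d →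
      f (x + a • d) ≤ f x + a * f d := by
    intro x d hx hd
    rcases eq_or_lt_of_le ha0 with h0 | h0
    · have : a = 0 := h0.symm
      subst this
      simp
    · have h1a : (0:ℝ) < 1 + a := by linarith
      set b : ℝ := 1/(1+a) with hb
      have hb0 : 0 < b := by positivity
      have hab : b + a * b = 1 := by rw [hb]; field_simp
      have hcomb : b • (x + a • d) + (a * b) • (x - d) = x := by
        funext j
        have hcoord : b * (x j + a * d j) + a * b * (x j - d j) = x j := by
          have : (b + a*b) * x j = x j := by rw [hab, one_mul]
          nlinarith [this]
        simpa [Pi.add_apply, Pi.sub_apply, Pi.smul_apply, smul_eq_mul, mul_add, mul_sub]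
          using hcoord
      have hcc := hFconc.2 (Set.mem_univ (x + a • d)) (Set.mem_univ (x - d)) hb0.le
        (mul_nonneg h0.le hb0.le) hab
      rw [hcomb, smul_eq_mul, smul_eq_mul] at hcc
      have hsub2 : F x ≤ F (x - d) + F d := by
        have := hFsub (x - d) d
        simpa using this
      have hnn : (0:Fin n → ℝ) ≤ x + a • d := by
        intro j
        have h1 := hx j
        have h2 := mul_nonneg ha0 (hd j)
        simpa [Pi.add_apply, Pi.smul_apply, smul_eq_mul] using add_nonneg h1 h2
      have hA2 : b * F x + a * b * F x = F x := by
        have : (b + a*b) * F x = F x := by rw [hab, one_mul]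
        nlinarith [this]
      have key2 : b * F (x + a • d) ≤ b * (F x + a * F d) := by
        have hexp := mul_le_mul_of_nonneg_left hsub2 (mul_nonneg h0.le hb0.le)
        have hexp2 : a * b * F x ≤ a * b * F (x - d) + a * b * F d := by nlinarith [hexp]
        nlinarith [hcc, hexp2, hA2]
      have key3 : F (x + a • d) ≤ F x + a * F d := le_of_mul_le_mul_left key2 hb0
      rw [hFeq _ hnn, hFeq _ hx, hFeq _ hd] at key3
      exact key3
  -- the finite subadditivity lemma
  have hmask_eq_sum : ∀ (s : Finset (Fin n)) (z : Fin n → ℝ),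
      mask s z = ∑ i ∈ s, Pi.single i (z i) := by
    intro s z
    funext j
    rw [Finset.sum_apply]
    simp only [mask, Pi.single_apply]
    rw [Finset.sum_ite_eq s j z]
  have hsumsub : ∀ (s : Finset (Fin n)), s.Nonempty → ∀ z : Fin n → ℝ, (∀ j, 0 ≤ z j) →
      f (mask s z) ≤ ∑ i ∈ s, f (Pi.single i (z i)) := by
    intro s hs z hz
    rw [hmask_eq_sum s z]
    induction hs using Finset.Nonempty.cons_induction with
    | singleton i => simp
    | cons i t hit ht ih =>
      rw [Finset.sum_cons, Finset.sum_cons]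
      have hnn1 : (0:Fin n→ℝ) ≤ Pi.single i (z i) := hsingle_nonneg i (z i) (hz i)
      have hnn2 : (0:Fin n→ℝ) ≤ ∑ j ∈ t, Pi.single j (z j) :=
        Finset.sum_nonneg fun j _ => hsingle_nonneg j (z j) (hz j)
      calc f (Pi.single i (z i) + ∑ j ∈ t, Pi.single j (z j))
          ≤ f (Pi.single i (z i)) + f (∑ j ∈ t, Pi.single j (z j)) :=
            hf_subadd _ _ hnn1 hnn2
        _ ≤ f (Pi.single i (z i)) + ∑ j ∈ t, f (Pi.single j (z j)) := by linarith [ih]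
  -- measurability and pointwise facts about Xhat, Xtil, Y
  have hXhat_meas : ∀ i, Measurable (Xhat i) := by
    intro i
    have hfe : Xhat i = fun ω => if X i ω ≤ τ i then X i ω else cst i :=
      funext fun ω => hXhat i ω
    rw [hfe]
    exact Measurable.ite (measurableSet_le (hX_meas i) measurable_const) (hX_meas i)
      measurable_const
  have hXtil_meas : ∀ i, Measurable (Xtil i) := by
    intro i
    have hfe : Xtil i = fun ω => if a * τ i < Xhat i ω then Xhat i ω else 0 :=
      funext fun ω => hXtil i ω
    rw [hfe]
    exact Measurable.ite (measurableSet_lt measurable_const (hXhat_meas i)) (hXhat_meas i)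
      measurable_const
  have hXhat_nn : ∀ i ω, 0 ≤ Xhat i ω := by
    intro i ω; rw [hXhat i ω]
    split
    · exact hX_nonneg i ω
    · exact le_of_lt (lt_of_le_of_lt (hτ i) (hcst i))
  have hXtil_nn : ∀ i ω, 0 ≤ Xtil i ω := by
    intro i ω; rw [hXtil i ω]
    split
    · exact hXhat_nn i ω
    · exact le_rfl
  have hY_nn : ∀ i ω, 0 ≤ Y i ω :=
    fun i ω => le_trans (mul_nonneg hP0.le (hXtil_nn i ω)) (hY i ω).1
  have hXtil_le_hat : ∀ i ω, Xtil i ω ≤ Xhat i ω := by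
    intro i ω; rw [hXtil i ω]
    split
    · exact le_rfl
    · exact hXhat_nn i ω
  have hhat_le_til_add : ∀ i ω, Xhat i ω ≤ Xtil i ω + a * τ i := by
    intro i ω
    rw [hXtil i ω]
    split
    · nlinarith [mul_nonneg ha0 (hτ i)]
    · next h => push_neg at h; linarith
  have hXtil_tail : ∀ i ω, τ i < X i ω → Xtil i ω = cst i := by
    intro i ω h
    have hhatv : Xhat i ω = cst i := by rw [hXhat i ω, if_neg (not_le.mpr h)]
    rw [hXtil i ω, hhatv, if_pos]
    calc a * τ i ≤ τ i := by nlinarith [hτ i]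
      _ < cst i := hcst i
  have hXhat_small : ∀ i ω, X i ω ≤ τ i → Xhat i ω = X i ω := by
    intro i ω h; rw [hXhat i ω, if_pos h]
  have hms : ∀ i : Fin n, Measurable (fun x : ℝ => (Pi.single i x : Fin n → ℝ)) := by
    intro i
    rw [measurable_pi_iff]
    intro j
    rcases eq_or_ne j i with rfl | hji
    · simpa using measurable_id'
    · simpa [Pi.single_eq_of_ne hji] using measurable_const
  intro S hS
  -- the trivial case S = ∅
  by_cases hSe : S = ∅
  · subst hSe
    have hmask0 : ∀ x : Fin n → ℝ, mask (∅ : Finset (Fin n)) x = 0 := by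
      intro x; funext j; simp [mask]
    have hu0 : u ∅ = f 0 := by
      rw [hu]
      simp only [hmask0]
      simp
    have hv0 : v ∅ = f 0 := by
      rw [hv]
      simp only [hmask0]
      simp
    rw [hu0, hv0]
    constructor
    · have h1 : (1-ε)^(k-1) * (1-Δ/ε) ≤ 1 := by nlinarith [hK1le, hr1, hK10, hr0]
      nlinarith [h1, hf0]
    · have hden : (0:ℝ) < (1-ε)^k * (1 - Δ/ε) := mul_pos hKk0 hr0
      have hden1 : (1-ε)^k * (1-Δ/ε) ≤ 1 := by nlinarith [hKkle, hr1, hKk0, hr0]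
      have hnum : (1:ℝ) ≤ 2*(1 + a*k/(ε-Δ)) := by
        have : 0 ≤ a*k/(ε-Δ) := by positivity
        linarith
      have hC : (1:ℝ) ≤ 2*(1 + a*k/(ε-Δ)) / ((1-ε)^k * (1-Δ/ε)) := by
        rw [le_div_iff₀ hden]; nlinarith
      nlinarith [hC, hf0]
  have hSne : S.Nonempty := Finset.nonempty_of_ne_empty hSe
  -- probability numbers
  have hTm : ∀ i, MeasurableSet {ω | τ i < X i ω} :=
    fun i => measurableSet_lt measurable_const (hX_meas i)
  have hTcm : ∀ i, MeasurableSet {ω | X i ω ≤ τ i} :=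
    fun i => measurableSet_le (hX_meas i) measurable_const
  have hcompl : ∀ i : Fin n, {ω | X i ω ≤ τ i} = {ω | τ i < X i ω}ᶜ := by
    intro i; ext ω; simp [not_lt]
  have hpq : ∀ i, (μ {ω | X i ω ≤ τ i}).toReal = 1 - (μ {ω | τ i < X i ω}).toReal := by
    intro i
    rw [hcompl i, prob_compl_eq_one_sub (hTm i),
      ENNReal.toReal_sub_of_le prob_le_one ENNReal.one_ne_top, ENNReal.toReal_one]
  have hq_lb : ∀ i, ε - Δ ≤ (μ {ω | τ i < X i ω}).toReal := by
    intro i; have h := (hquant i).2; rw [hpq i] at h; linarith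
  have hq_ub : ∀ i, (μ {ω | τ i < X i ω}).toReal ≤ ε := by
    intro i; have h := (hquant i).1; rw [hpq i] at h; linarith
  have hq_pos : ∀ i, 0 < (μ {ω | τ i < X i ω}).toReal :=
    fun i => lt_of_lt_of_le he0 (hq_lb i)
  have hp_lb : ∀ i, 1 - ε ≤ (μ {ω | X i ω ≤ τ i}).toReal := fun i => (hquant i).1
  -- facts about H
  have hH_nn : ∀ i, 0 ≤ H i := by
    intro i; rw [← hcstH i]
    exact hf_nonneg _ (hsingle_nonneg i (cst i) (le_of_lt (lt_of_le_of_lt (hτ i) (hcst i))))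
  have hqH : ∀ i, ∫ ω, Set.indicator {ω' | τ i < X i ω'} (fun ω' => f (Pi.single i (X i ω'))) ω ∂μ
      = (μ {ω | τ i < X i ω}).toReal * H i := by
    intro i
    rw [integral_indicator (hTm i), hH i, mul_comm, div_mul_cancel₀ _ (hq_pos i).ne']
  have hG_meas : ∀ i, Measurable
      (fun ω => Set.indicator {ω' | τ i < X i ω'} (fun ω' => f (Pi.single i (X i ω'))) ω) :=
    fun i => (hf_meas.comp ((hms i).comp (hX_meas i))).indicator (hTm i)
  have hG_int : ∀ i, Integrable
      (fun ω => Set.indicator {ω' | τ i < X i ω'} (fun ω' => f (Pi.single i (X i ω'))) ω) μ := by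
    intro i
    refine (hH_int i).mono' (hG_meas i).aestronglyMeasurable ?_
    filter_upwards with ω
    rw [Real.norm_eq_abs, abs_of_nonneg (Set.indicator_nonneg
      (fun ω' _ => hf_nonneg _ (hsingle_nonneg i _ (hX_nonneg i ω'))) ω)]
    exact Set.indicator_le_self'
      (fun ω' _ => hf_nonneg _ (hsingle_nonneg i _ (hX_nonneg i ω'))) ω
  -- measurability of the masked integrands
  have hmaskmeas : ∀ (Z : Fin n → Ωs → ℝ), (∀ i, Measurable (Z i)) →
      Measurable (fun ω => f (mask S (fun i => Z i ω))) := by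
    intro Z hZ
    apply hf_meas.comp
    rw [measurable_pi_iff]
    intro j
    by_cases hj : j ∈ S
    · simpa [mask, hj] using hZ j
    · simpa [mask, hj] using measurable_const
  -- pointwise fact (1-ε) f(Xtil_S) ≤ f(Y_S) and integrability of f ∘ Xtil_S
  have hpt3 : ∀ ω, (1-ε) * f (mask S (fun i => Xtil i ω)) ≤ f (mask S (fun i => Y i ω)) := by
    intro ω
    have hmle : (1-ε) • mask S (fun i => Xtil i ω) ≤ mask S (fun i => Y i ω) := by
      intro j
      by_cases hj : j ∈ S
      · simp only [Pi.smul_apply, mask, if_pos hj, smul_eq_mul]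
        exact (hY j ω).1
      · simp [mask, hj]
    have h1 := hray (mask S (fun i => Xtil i ω))
      (hmask_nonneg S _ (fun j => hXtil_nn j ω)) (1-ε) hP0.le hP1
    have h2 := hf_mono _ _
      (smul_nonneg hP0.le (hmask_nonneg S _ (fun j => hXtil_nn j ω))) hmle
    linarith
  have hXtilS_meas := hmaskmeas Xtil hXtil_meas
  have hXtilS_int : Integrable (fun ω => f (mask S (fun i => Xtil i ω))) μ := by
    refine ((hv_int S).const_mul (1/(1-ε))).mono' hXtilS_meas.aestronglyMeasurable ?_
    filter_upwards with ω
    rw [Real.norm_eq_abs, abs_of_nonneg (hf_nonneg _ (hmask_nonneg S _ fun j => hXtil_nn j ω))]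
    have h4 : f (mask S fun i => Xtil i ω) ≤ f (mask S fun i => Y i ω) / (1-ε) := by
      rw [le_div_iff₀ hP0]
      nlinarith [hpt3 ω]
    calc f (mask S fun i => Xtil i ω) ≤ f (mask S fun i => Y i ω) / (1-ε) := h4
      _ = 1/(1-ε) * f (mask S fun i => Y i ω) := by ring
  -- pointwise fact f(Xhat_S) ≤ f(Xtil_S) + a f(τ_S) and integrability of f ∘ Xhat_S
  have hτS_nn : (0:Fin n → ℝ) ≤ mask S τ := hmask_nonneg S τ hτ
  have hpt5 : ∀ ω, f (mask S fun i => Xhat i ω)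
      ≤ f (mask S fun i => Xtil i ω) + a * f (mask S τ) := by
    intro ω
    have hle : mask S (fun i => Xhat i ω) ≤ mask S (fun i => Xtil i ω) + a • mask S τ := by
      intro j
      by_cases hj : j ∈ S
      · simp only [mask, Pi.add_apply, Pi.smul_apply, if_pos hj, smul_eq_mul]
        exact hhat_le_til_add j ω
      · simp [mask, hj]
    have h1 := hf_mono _ _ (hmask_nonneg S _ fun j => hXhat_nn j ω) hle
    have h2 := hC2 (mask S fun i => Xtil i ω) (mask S τ)
      (hmask_nonneg S _ fun j => hXtil_nn j ω) hτS_nn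
    linarith
  have hXhatS_meas := hmaskmeas Xhat hXhat_meas
  have hXhatS_int : Integrable (fun ω => f (mask S fun i => Xhat i ω)) μ := by
    refine (hXtilS_int.add (integrable_const (a * f (mask S τ)))).mono'
      hXhatS_meas.aestronglyMeasurable ?_
    filter_upwards with ω
    rw [Real.norm_eq_abs, abs_of_nonneg (hf_nonneg _ (hmask_nonneg S _ fun j => hXhat_nn j ω))]
    exact hpt5 ω
  -- indicator-constant integrals
  have hindH_int : ∀ i, Integrable
      (fun ω => Set.indicator {ω' | τ i < X i ω'} (fun _ => H i) ω) μ :=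
    fun i => (integrable_const (H i)).indicator (hTm i)
  have hindH_val : ∀ i, ∫ ω, Set.indicator {ω' | τ i < X i ω'} (fun _ => H i) ω ∂μ
      = (μ {ω | τ i < X i ω}).toReal * H i := by
    intro i
    rw [integral_indicator_const (H i) (hTm i), smul_eq_mul]; rfl
  -- the "first tail index" events
  set Ei : Fin n → Set Ωs := fun i =>
    {ω | τ i < X i ω} ∩ {ω | ∀ j ∈ S.filter (fun j => j < i), X j ω ≤ τ j} with hEi_def
  have hF_eq : ∀ i : Fin n, {ω | ∀ j ∈ S.filter (fun j => j < i), X j ω ≤ τ j}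
      = ⋂ j ∈ S.filter (fun j => j < i), X j ⁻¹' Set.Iic (τ j) := by
    intro i; ext ω
    simp [Set.mem_iInter, Set.mem_preimage, Set.mem_Iic]
  have hFm : ∀ i, MeasurableSet {ω | ∀ j ∈ S.filter (fun j => j < i), X j ω ≤ τ j} := by
    intro i; rw [hF_eq i]
    exact Finset.measurableSet_biInter _ (fun j _ => hX_meas j measurableSet_Iic)
  have hEim : ∀ i, MeasurableSet (Ei i) := fun i => (hTm i).inter (hFm i)
  have hprod : ∀ (t : Finset (Fin n)) (B : Fin n → Set ℝ),
      (∀ i ∈ t, MeasurableSet (B i)) →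
      μ (⋂ i ∈ t, X i ⁻¹' B i) = ∏ i ∈ t, μ (X i ⁻¹' B i) :=
    fun t B hB => hX_indep.measure_inter_preimage_eq_mul t hB
  have hμF : ∀ i : Fin n, (μ {ω | ∀ j ∈ S.filter (fun j => j < i), X j ω ≤ τ j}).toReal
      = ∏ j ∈ S.filter (fun j => j < i), (μ {ω | X j ω ≤ τ j}).toReal := by
    intro i
    rw [hF_eq i, hprod _ _ (fun j _ => measurableSet_Iic), ENNReal.toReal_prod]
    exact Finset.prod_congr rfl fun j _ => rfl
  have hμEi : ∀ i : Fin n, i ∈ S → (μ (Ei i)).toReal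
      = (μ {ω | τ i < X i ω}).toReal
        * ∏ j ∈ S.filter (fun j => j < i), (μ {ω | X j ω ≤ τ j}).toReal := by
    intro i hi
    have hnotmem : i ∉ S.filter (fun j => j < i) := by simp
    set B : Fin n → Set ℝ := fun j => if j = i then Set.Ioi (τ i) else Set.Iic (τ j) with hB_def
    have hBm : ∀ j ∈ insert i (S.filter (fun j => j < i)), MeasurableSet (B j) := by
      intro j _
      by_cases h : j = i <;> simp [hB_def, h, measurableSet_Ioi, measurableSet_Iic]
    have hset : Ei i = ⋂ j ∈ insert i (S.filter (fun j => j < i)), X j ⁻¹' B j := by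
      ext ω
      simp only [hEi_def, Set.mem_inter_iff, Set.mem_setOf_eq, Set.mem_iInter,
        Finset.mem_insert, Set.mem_preimage, hB_def]
      constructor
      · rintro ⟨h1, h2⟩ j hj
        rcases hj with rfl | hj
        · simpa using h1
        · have hji : j ≠ i := ne_of_lt (Finset.mem_filter.mp hj).2
          simpa [if_neg hji] using h2 j hj
      · intro h
        refine ⟨?_, ?_⟩
        · have := h i (Or.inl rfl); simpa using this
        · intro j hj
          have hji : j ≠ i := ne_of_lt (Finset.mem_filter.mp hj).2
          have := h j (Or.inr hj)
          simpa [if_neg hji] using this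
    rw [hset, hprod _ _ hBm, Finset.prod_insert hnotmem, ENNReal.toReal_mul,
      ENNReal.toReal_prod]
    congr 1
    · congr 1
      congr 1
      ext ω
      simp [hB_def]
    · apply Finset.prod_congr rfl
      intro j hj
      have hji : j ≠ i := ne_of_lt (Finset.mem_filter.mp hj).2
      congr 1
      congr 1
      ext ω
      simp [hB_def, hji]
  have hcard_filt : ∀ i ∈ S, (S.filter (fun j => j < i)).card ≤ k - 1 := by
    intro i hi
    have h1 : S.filter (fun j => j < i) ⊆ S.erase i := by
      intro j hj
      rcases Finset.mem_filter.mp hj with ⟨hjS, hlt⟩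
      exact Finset.mem_erase.mpr ⟨ne_of_lt hlt, hjS⟩
    calc (S.filter (fun j => j < i)).card ≤ (S.erase i).card := Finset.card_le_card h1
      _ = S.card - 1 := Finset.card_erase_of_mem hi
      _ ≤ k - 1 := Nat.sub_le_sub_right hS 1
  have hprod_p_lb : ∀ i ∈ S,
      (1-ε)^(k-1) ≤ ∏ j ∈ S.filter (fun j => j < i), (μ {ω | X j ω ≤ τ j}).toReal := by
    intro i hi
    calc (1-ε)^(k-1) ≤ (1-ε)^((S.filter (fun j => j < i)).card) :=
          pow_le_pow_of_le_one hP0.le hP1 (hcard_filt i hi)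
      _ = ∏ _j ∈ S.filter (fun j => j < i), (1-ε) := by rw [Finset.prod_const]
      _ ≤ ∏ j ∈ S.filter (fun j => j < i), (μ {ω | X j ω ≤ τ j}).toReal :=
          Finset.prod_le_prod (fun j _ => hP0.le) (fun j _ => hp_lb j)
  have hEdisj : ∀ i ∈ S, ∀ j ∈ S, i ≠ j → ∀ ω, ω ∈ Ei i → ω ∉ Ei j := by
    intro i hi j hj hij ω hωi hωj
    rcases lt_or_gt_of_ne hij with h | h
    · exact absurd (hωj.2 i (Finset.mem_filter.mpr ⟨hi, h⟩)) (not_le.mpr hωi.1)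
    · exact absurd (hωi.2 j (Finset.mem_filter.mpr ⟨hj, h⟩)) (not_le.mpr hωj.1)
  have hkey : ∀ (g : Fin n → Ωs → ℝ) (φ : Ωs → ℝ),
      (∀ ω, 0 ≤ φ ω) → (∀ i ∈ S, ∀ ω, ω ∈ Ei i → g i ω ≤ φ ω) →
      ∀ ω, (∑ i ∈ S, Set.indicator (Ei i) (g i) ω) ≤ φ ω := by
    intro g φ hφ hg ω
    by_cases hex : ∃ i ∈ S, ω ∈ Ei i
    · obtain ⟨i₀, hi₀, hωi₀⟩ := hex
      have hsum : ∑ i ∈ S, Set.indicator (Ei i) (g i) ω = Set.indicator (Ei i₀) (g i₀) ω := by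
        apply Finset.sum_eq_single_of_mem i₀ hi₀
        intro j hj hji
        exact Set.indicator_of_notMem (hEdisj i₀ hi₀ j hj (Ne.symm hji) ω hωi₀) _
      rw [hsum, Set.indicator_of_mem hωi₀]
      exact hg i₀ hi₀ ω hωi₀
    · push_neg at hex
      have hz : ∀ i ∈ S, Set.indicator (Ei i) (g i) ω = 0 :=
        fun i hi => Set.indicator_of_notMem (hex i hi) _
      rw [Finset.sum_eq_zero hz]
      exact hφ ω
  -- Claim I : (1-ε)^(k-1) Σ q H ≤ A
  have hEiXtil : ∀ i ∈ S, ∀ ω, ω ∈ Ei i → H i ≤ f (mask S fun b => Xtil b ω) := by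
    intro i hi ω hω
    have h1 : τ i < X i ω := hω.1
    have h2 : Xtil i ω = cst i := hXtil_tail i ω h1
    have hcst_nn : (0:ℝ) ≤ cst i := le_of_lt (lt_of_le_of_lt (hτ i) (hcst i))
    have h3 : Pi.single i (cst i) ≤ mask S fun b => Xtil b ω := by
      intro j
      rcases eq_or_ne j i with rfl | hji
      · simp [mask, hi, h2]
      · simp only [Pi.single_eq_of_ne hji]
        by_cases hj : j ∈ S <;> simp [mask, hj, hXtil_nn j ω]
    rw [← hcstH i]
    exact hf_mono _ _ (hsingle_nonneg i _ hcst_nn) h3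
  have hI : (1-ε)^(k-1) * ∑ i ∈ S, (μ {ω | τ i < X i ω}).toReal * H i
      ≤ ∫ ω, f (mask S fun i => Xtil i ω) ∂μ := by
    have hint : ∀ i ∈ S, Integrable (fun ω => Set.indicator (Ei i) (fun _ => H i) ω) μ :=
      fun i _ => (integrable_const (H i)).indicator (hEim i)
    have h1 : ∫ ω, (∑ i ∈ S, Set.indicator (Ei i) (fun _ => H i) ω) ∂μ
        = ∑ i ∈ S, (μ (Ei i)).toReal * H i := by
      rw [integral_finset_sum S hint]
      refine Finset.sum_congr rfl fun i _ => ?_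
      rw [integral_indicator_const (H i) (hEim i), smul_eq_mul]; rfl
    have h2 : ∫ ω, (∑ i ∈ S, Set.indicator (Ei i) (fun _ => H i) ω) ∂μ
        ≤ ∫ ω, f (mask S fun i => Xtil i ω) ∂μ := by
      apply integral_mono (integrable_finset_sum S hint) hXtilS_int
      intro ω
      exact hkey _ _ (fun ω' => hf_nonneg _ (hmask_nonneg S _ fun j => hXtil_nn j ω'))
        (fun i hi ω' hω' => hEiXtil i hi ω' hω') ω
    rw [h1] at h2
    refine le_trans ?_ h2
    rw [Finset.mul_sum]
    apply Finset.sum_le_sum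
    intro i hi
    rw [hμEi i hi]
    nlinarith [hH_nn i, hq_pos i, hprod_p_lb i hi, hK10,
      mul_le_mul_of_nonneg_left (hprod_p_lb i hi)
        (mul_nonneg (hq_pos i).le (hH_nn i))]
  -- Claim II : (1-ε)^(k-1) Σ q H ≤ u S
  have hEiX : ∀ i ∈ S, ∀ ω, ω ∈ Ei i → f (Pi.single i (X i ω)) ≤ f (mask S fun b => X b ω) := by
    intro i hi ω _
    have h3 : Pi.single i (X i ω) ≤ mask S fun b => X b ω := by
      intro j
      rcases eq_or_ne j i with rfl | hji
      · simp [mask, hi]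
      · simp only [Pi.single_eq_of_ne hji]
        by_cases hj : j ∈ S <;> simp [mask, hj, hX_nonneg j ω]
    exact hf_mono _ _ (hsingle_nonneg i _ (hX_nonneg i ω)) h3
  have hindEi_int : ∀ i, Integrable
      (fun ω => Set.indicator (Ei i) (fun ω' => f (Pi.single i (X i ω'))) ω) μ := by
    intro i
    refine (hH_int i).mono'
      ((hf_meas.comp ((hms i).comp (hX_meas i))).indicator (hEim i)).aestronglyMeasurable ?_
    filter_upwards with ω
    rw [Real.norm_eq_abs, abs_of_nonneg (Set.indicator_nonneg
      (fun ω' _ => hf_nonneg _ (hsingle_nonneg i _ (hX_nonneg i ω'))) ω)]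
    exact Set.indicator_le_self'
      (fun ω' _ => hf_nonneg _ (hsingle_nonneg i _ (hX_nonneg i ω'))) ω
  have hintEi : ∀ i ∈ S, ∫ ω, Set.indicator (Ei i) (fun ω' => f (Pi.single i (X i ω'))) ω ∂μ
      = ((μ {ω | τ i < X i ω}).toReal * H i)
        * ∏ j ∈ S.filter (fun j => j < i), (μ {ω | X j ω ≤ τ j}).toReal := by
    intro i _
    set φ : ({x // x ∈ ({i} : Finset (Fin n))} → ℝ) → ℝ :=
      fun w => Set.indicator (Set.Ioi (τ i)) (fun x => f (Pi.single i x))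
        (w ⟨i, Finset.mem_singleton_self i⟩) with hφ_def
    set ψ : ({x // x ∈ S.filter (fun j => j < i)} → ℝ) → ℝ :=
      fun w => Set.indicator
        {w' : {x // x ∈ S.filter (fun j => j < i)} → ℝ | ∀ j, w' j ≤ τ j.1}
        (fun _ => (1:ℝ)) w with hψ_def
    have hφZ : (φ ∘ fun ω (j : {x // x ∈ ({i} : Finset (Fin n))}) => X j.1 ω)
        = fun ω => Set.indicator {ω' | τ i < X i ω'}
            (fun ω' => f (Pi.single i (X i ω'))) ω := by
      funext ω
      show Set.indicator (Set.Ioi (τ i)) (fun x => f (Pi.single i x)) (X i ω) = _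
      by_cases h : ω ∈ {ω' | τ i < X i ω'}
      · rw [Set.indicator_of_mem h, Set.indicator_of_mem (show X i ω ∈ Set.Ioi (τ i) from h)]
      · rw [Set.indicator_of_notMem h,
          Set.indicator_of_notMem (show X i ω ∉ Set.Ioi (τ i) from h)]
    have hψZ : (ψ ∘ fun ω (j : {x // x ∈ S.filter (fun j => j < i)}) => X j.1 ω)
        = fun ω => Set.indicator {ω' | ∀ j ∈ S.filter (fun j => j < i), X j ω' ≤ τ j}
            (fun _ => (1:ℝ)) ω := by
      funext ω
      show Set.indicator {w' : {x // x ∈ S.filter (fun j => j < i)} → ℝ | ∀ j, w' j ≤ τ j.1}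
        (fun _ => (1:ℝ)) (fun j => X j.1 ω) = _
      have hiff : ((fun j : {x // x ∈ S.filter (fun j => j < i)} => X j.1 ω)
          ∈ {w' : {x // x ∈ S.filter (fun j => j < i)} → ℝ | ∀ j, w' j ≤ τ j.1})
          ↔ ω ∈ {ω' | ∀ j ∈ S.filter (fun j => j < i), X j ω' ≤ τ j} := by
        simp [Set.mem_setOf_eq, Subtype.forall]
      by_cases h : ω ∈ {ω' | ∀ j ∈ S.filter (fun j => j < i), X j ω' ≤ τ j}
      · rw [Set.indicator_of_mem (hiff.mpr h), Set.indicator_of_mem h]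
      · rw [Set.indicator_of_notMem (fun hc => h (hiff.mp hc)), Set.indicator_of_notMem h]
    have hmul : (fun ω => Set.indicator (Ei i) (fun ω' => f (Pi.single i (X i ω'))) ω)
        = fun ω => ((φ ∘ fun ω (j : {x // x ∈ ({i} : Finset (Fin n))}) => X j.1 ω) ω)
            * ((ψ ∘ fun ω (j : {x // x ∈ S.filter (fun j => j < i)}) => X j.1 ω) ω) := by
      funext ω
      simp only [hφZ, hψZ]
      by_cases h1 : ω ∈ {ω' | τ i < X i ω'}
        <;> by_cases h2 : ω ∈ {ω' | ∀ j ∈ S.filter (fun j => j < i), X j ω' ≤ τ j}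
      · rw [Set.indicator_of_mem h1, Set.indicator_of_mem h2,
          Set.indicator_of_mem (show ω ∈ Ei i from ⟨h1, h2⟩), mul_one]
      · rw [Set.indicator_of_notMem h2,
          Set.indicator_of_notMem (show ω ∉ Ei i from fun hc => h2 hc.2), mul_zero]
      · rw [Set.indicator_of_notMem h1,
          Set.indicator_of_notMem (show ω ∉ Ei i from fun hc => h1 hc.1), zero_mul]
      · rw [Set.indicator_of_notMem h1,
          Set.indicator_of_notMem (show ω ∉ Ei i from fun hc => h1 hc.1), zero_mul]
    have hdisj : Disjoint ({i} : Finset (Fin n)) (S.filter (fun j => j < i)) := by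
      rw [Finset.disjoint_singleton_left]
      simp
    have hbase := hX_indep.indepFun_finset {i} (S.filter (fun j => j < i)) hdisj hX_meas
    have hφm : Measurable φ :=
      ((hf_meas.comp (hms i)).indicator measurableSet_Ioi).comp (measurable_pi_apply _)
    have hψm : Measurable ψ := by
      apply Measurable.indicator measurable_const
      have hseteq : {w' : {x // x ∈ S.filter (fun j => j < i)} → ℝ | ∀ j, w' j ≤ τ j.1}
          = ⋂ j, {w' : {x // x ∈ S.filter (fun j => j < i)} → ℝ | w' j ≤ τ j.1} := by
        ext w; simp [Set.mem_iInter]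
      rw [hseteq]
      exact MeasurableSet.iInter fun j => measurableSet_le (measurable_pi_apply j)
        measurable_const
    have hIndep := (hbase.comp hφm hψm)
    have hint1 : Integrable (φ ∘ fun ω (j : {x // x ∈ ({i} : Finset (Fin n))}) => X j.1 ω) μ := by
      rw [hφZ]; exact hG_int i
    have hint2 : Integrable
        (ψ ∘ fun ω (j : {x // x ∈ S.filter (fun j => j < i)}) => X j.1 ω) μ := by
      rw [hψZ]; exact (integrable_const (1:ℝ)).indicator (hFm i)
    calc ∫ ω, Set.indicator (Ei i) (fun ω' => f (Pi.single i (X i ω'))) ω ∂μ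
        = ∫ ω, ((φ ∘ fun ω (j : {x // x ∈ ({i} : Finset (Fin n))}) => X j.1 ω) ω)
            * ((ψ ∘ fun ω (j : {x // x ∈ S.filter (fun j => j < i)}) => X j.1 ω) ω) ∂μ := by
          rw [hmul]
      _ = (∫ ω, (φ ∘ fun ω (j : {x // x ∈ ({i} : Finset (Fin n))}) => X j.1 ω) ω ∂μ)
            * ∫ ω, (ψ ∘ fun ω (j : {x // x ∈ S.filter (fun j => j < i)}) => X j.1 ω) ω ∂μ :=
          hIndep.integral_fun_mul_eq_mul_integral hint1.aestronglyMeasurable hint2.aestronglyMeasurable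
      _ = ((μ {ω | τ i < X i ω}).toReal * H i)
            * ∏ j ∈ S.filter (fun j => j < i), (μ {ω | X j ω ≤ τ j}).toReal := by
          rw [hφZ, hψZ, hqH i]
          congr 1
          rw [integral_indicator_const (1:ℝ) (hFm i), smul_eq_mul, mul_one]; exact hμF i
  have hII : (1-ε)^(k-1) * ∑ i ∈ S, (μ {ω | τ i < X i ω}).toReal * H i ≤ u S := by
    have hintsum : ∀ i ∈ S, Integrable
        (fun ω => Set.indicator (Ei i) (fun ω' => f (Pi.single i (X i ω'))) ω) μ :=
      fun i _ => hindEi_int i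
    have h2 : ∫ ω, (∑ i ∈ S, Set.indicator (Ei i) (fun ω' => f (Pi.single i (X i ω'))) ω) ∂μ
        ≤ u S := by
      rw [hu S]
      apply integral_mono (integrable_finset_sum S hintsum) (hu_int S)
      intro ω
      exact hkey _ _ (fun ω' => hf_nonneg _ (hmask_nonneg S _ fun j => hX_nonneg j ω')) hEiX ω
    rw [integral_finset_sum S hintsum] at h2
    refine le_trans ?_ h2
    rw [Finset.mul_sum]
    apply Finset.sum_le_sum
    intro i hi
    rw [hintEi i hi]
    nlinarith [hprod_p_lb i hi, mul_nonneg (hq_pos i).le (hH_nn i),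
      mul_le_mul_of_nonneg_left (hprod_p_lb i hi) (mul_nonneg (hq_pos i).le (hH_nn i))]
  -- nonnegativity of u and v
  have hvS_nn : 0 ≤ v S := by
    rw [hv S]
    exact integral_nonneg fun ω => hf_nonneg _ (hmask_nonneg S _ fun j => hY_nn j ω)
  have huS_nn : 0 ≤ u S := by
    rw [hu S]
    exact integral_nonneg fun ω => hf_nonneg _ (hmask_nonneg S _ fun j => hX_nonneg j ω)
  -- (1-ε) A ≤ v S
  have hA_le : (1-ε) * (∫ ω, f (mask S fun i => Xtil i ω) ∂μ) ≤ v S := by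
    rw [hv S, ← integral_const_mul]
    exact integral_mono (hXtilS_int.const_mul _) (hv_int S) (fun ω => hpt3 ω)
  -- the pointwise splitting inequalities
  have hnn_if : ∀ ω j, 0 ≤ if X j ω ≤ τ j then X j ω else 0 := by
    intro ω j
    split
    · exact hX_nonneg j ω
    · exact le_rfl
  have hpt1 : ∀ ω, f (mask S fun i => X i ω) ≤ f (mask S fun i => Xhat i ω)
      + ∑ i ∈ S, Set.indicator {ω' | τ i < X i ω'} (fun ω' => f (Pi.single i (X i ω'))) ω := by
    intro ω
    have hsum_nn : 0 ≤ ∑ i ∈ S, Set.indicator {ω' | τ i < X i ω'}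
        (fun ω' => f (Pi.single i (X i ω'))) ω :=
      Finset.sum_nonneg fun i _ => Set.indicator_nonneg
        (fun ω' _ => hf_nonneg _ (hsingle_nonneg i _ (hX_nonneg i ω'))) ω
    by_cases hJ : (S.filter fun i => τ i < X i ω) = ∅
    · have hXeq : (mask S fun i => X i ω) = mask S fun i => Xhat i ω := by
        funext j
        by_cases hj : j ∈ S
        · have hle : X j ω ≤ τ j := by
            by_contra hc
            exact (Finset.eq_empty_iff_forall_notMem.mp hJ j)
              (Finset.mem_filter.mpr ⟨hj, not_le.mp hc⟩)
          simp [mask, hj, hXhat_small j ω hle]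
        · simp [mask, hj]
      rw [hXeq]
      linarith
    · have hJne : (S.filter fun i => τ i < X i ω).Nonempty := Finset.nonempty_of_ne_empty hJ
      have hsplit : (mask S fun i => X i ω)
          = (mask S fun i => if X i ω ≤ τ i then X i ω else 0)
            + mask (S.filter fun i => τ i < X i ω) (fun i => X i ω) := by
        funext j
        by_cases hj : j ∈ S
        · by_cases hle : X j ω ≤ τ j
          · have hnf : j ∉ S.filter fun i => τ i < X i ω := by
              simp [Finset.mem_filter, hj, not_lt.mpr hle]
            simp [mask, Pi.add_apply, hj, hle, hnf]
          · have hmf : j ∈ S.filter fun i => τ i < X i ω :=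
              Finset.mem_filter.mpr ⟨hj, not_le.mp hle⟩
            simp [mask, Pi.add_apply, hj, hle, hmf]
        · have hnf : j ∉ S.filter fun i => τ i < X i ω := by
            simp [Finset.mem_filter, hj]
          simp [mask, Pi.add_apply, hj, hnf]
      have h1 : f (mask S fun i => X i ω)
          ≤ f (mask S fun i => if X i ω ≤ τ i then X i ω else 0)
            + f (mask (S.filter fun i => τ i < X i ω) fun i => X i ω) := by
        rw [hsplit]
        exact hf_subadd _ _ (hmask_nonneg _ _ (hnn_if ω))
          (hmask_nonneg _ _ fun j => hX_nonneg j ω)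
      have h2 : f (mask S fun i => if X i ω ≤ τ i then X i ω else 0)
          ≤ f (mask S fun i => Xhat i ω) := by
        apply hf_mono _ _ (hmask_nonneg _ _ (hnn_if ω))
        intro j
        by_cases hj : j ∈ S
        · simp only [mask, if_pos hj]
          by_cases hle : X j ω ≤ τ j
          · rw [if_pos hle, hXhat_small j ω hle]
          · rw [if_neg hle]; exact hXhat_nn j ω
        · simp [mask, hj]
      have h3 : f (mask (S.filter fun i => τ i < X i ω) fun i => X i ω)
          ≤ ∑ i ∈ S.filter (fun i => τ i < X i ω), f (Pi.single i (X i ω)) :=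
        hsumsub _ hJne _ (fun j => hX_nonneg j ω)
      have h4 : ∑ i ∈ S.filter (fun i => τ i < X i ω), f (Pi.single i (X i ω))
          = ∑ i ∈ S, Set.indicator {ω' | τ i < X i ω'}
              (fun ω' => f (Pi.single i (X i ω'))) ω := by
        rw [Finset.sum_filter]
        refine Finset.sum_congr rfl fun i _ => ?_
        by_cases h : τ i < X i ω
        · rw [if_pos h, Set.indicator_of_mem (show ω ∈ {ω' | τ i < X i ω'} from h)]
        · rw [if_neg h,
            Set.indicator_of_notMem (show ω ∉ {ω' | τ i < X i ω'} from h)]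
      linarith
  have hpt2 : ∀ ω, f (mask S fun i => Xhat i ω) ≤ f (mask S fun i => X i ω)
      + ∑ i ∈ S, Set.indicator {ω' | τ i < X i ω'} (fun _ => H i) ω := by
    intro ω
    have hsum_nn : 0 ≤ ∑ i ∈ S, Set.indicator {ω' | τ i < X i ω'} (fun _ => H i) ω :=
      Finset.sum_nonneg fun i _ => Set.indicator_nonneg (fun ω' _ => hH_nn i) ω
    by_cases hJ : (S.filter fun i => τ i < X i ω) = ∅
    · have hXeq : (mask S fun i => Xhat i ω) = mask S fun i => X i ω := by
        funext j
        by_cases hj : j ∈ S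
        · have hle : X j ω ≤ τ j := by
            by_contra hc
            exact (Finset.eq_empty_iff_forall_notMem.mp hJ j)
              (Finset.mem_filter.mpr ⟨hj, not_le.mp hc⟩)
          simp [mask, hj, hXhat_small j ω hle]
        · simp [mask, hj]
      rw [hXeq]
      linarith
    · have hJne : (S.filter fun i => τ i < X i ω).Nonempty := Finset.nonempty_of_ne_empty hJ
      have hsplit : (mask S fun i => Xhat i ω)
          = (mask S fun i => if X i ω ≤ τ i then X i ω else 0)
            + mask (S.filter fun i => τ i < X i ω) cst := by
        funext j
        by_cases hj : j ∈ S
        · by_cases hle : X j ω ≤ τ j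
          · have hnf : j ∉ S.filter fun i => τ i < X i ω := by
              simp [Finset.mem_filter, hj, not_lt.mpr hle]
            simp [mask, Pi.add_apply, hj, hle, hnf, hXhat_small j ω hle]
          · have hmf : j ∈ S.filter fun i => τ i < X i ω :=
              Finset.mem_filter.mpr ⟨hj, not_le.mp hle⟩
            have hhatv : Xhat j ω = cst j := by rw [hXhat j ω, if_neg hle]
            simp [mask, Pi.add_apply, hj, hle, hmf, hhatv]
        · have hnf : j ∉ S.filter fun i => τ i < X i ω := by
            simp [Finset.mem_filter, hj]
          simp [mask, Pi.add_apply, hj, hnf]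
      have h1 : f (mask S fun i => Xhat i ω)
          ≤ f (mask S fun i => if X i ω ≤ τ i then X i ω else 0)
            + f (mask (S.filter fun i => τ i < X i ω) cst) := by
        rw [hsplit]
        exact hf_subadd _ _ (hmask_nonneg _ _ (hnn_if ω))
          (hmask_nonneg _ _ fun j => le_of_lt (lt_of_le_of_lt (hτ j) (hcst j)))
      have h2 : f (mask S fun i => if X i ω ≤ τ i then X i ω else 0)
          ≤ f (mask S fun i => X i ω) := by
        apply hf_mono _ _ (hmask_nonneg _ _ (hnn_if ω))
        intro j
        by_cases hj : j ∈ S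
        · simp only [mask, if_pos hj]
          by_cases hle : X j ω ≤ τ j
          · rw [if_pos hle]
          · rw [if_neg hle]; exact hX_nonneg j ω
        · simp [mask, hj]
      have h3 : f (mask (S.filter fun i => τ i < X i ω) cst)
          ≤ ∑ i ∈ S.filter (fun i => τ i < X i ω), f (Pi.single i (cst i)) :=
        hsumsub _ hJne _ (fun j => le_of_lt (lt_of_le_of_lt (hτ j) (hcst j)))
      have h4 : ∑ i ∈ S.filter (fun i => τ i < X i ω), f (Pi.single i (cst i))
          = ∑ i ∈ S, Set.indicator {ω' | τ i < X i ω'} (fun _ => H i) ω := by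
        rw [Finset.sum_filter]
        refine Finset.sum_congr rfl fun i _ => ?_
        by_cases h : τ i < X i ω
        · rw [if_pos h, Set.indicator_of_mem (show ω ∈ {ω' | τ i < X i ω'} from h), hcstH i]
        · rw [if_neg h,
            Set.indicator_of_notMem (show ω ∉ {ω' | τ i < X i ω'} from h)]
      linarith
  -- integrated versions
  have hu_le : u S ≤ (∫ ω, f (mask S fun i => Xtil i ω) ∂μ) + a * f (mask S τ)
      + ∑ i ∈ S, (μ {ω | τ i < X i ω}).toReal * H i := by
    have hptotal : ∀ ω, f (mask S fun i => X i ω)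
        ≤ (f (mask S fun i => Xtil i ω) + a * f (mask S τ))
          + ∑ i ∈ S, Set.indicator {ω' | τ i < X i ω'}
              (fun ω' => f (Pi.single i (X i ω'))) ω := by
      intro ω
      have h1 := hpt1 ω
      have h2 := hpt5 ω
      linarith
    have hint : Integrable (fun ω => (f (mask S fun i => Xtil i ω) + a * f (mask S τ))
        + ∑ i ∈ S, Set.indicator {ω' | τ i < X i ω'}
            (fun ω' => f (Pi.single i (X i ω'))) ω) μ :=
      (hXtilS_int.add (integrable_const _)).add (integrable_finset_sum S fun i _ => hG_int i)
    calc u S = ∫ ω, f (mask S fun i => X i ω) ∂μ := hu S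
      _ ≤ ∫ ω, ((f (mask S fun i => Xtil i ω) + a * f (mask S τ))
            + ∑ i ∈ S, Set.indicator {ω' | τ i < X i ω'}
                (fun ω' => f (Pi.single i (X i ω'))) ω) ∂μ :=
          integral_mono (hu_int S) hint hptotal
      _ = (∫ ω, f (mask S fun i => Xtil i ω) ∂μ) + a * f (mask S τ)
            + ∑ i ∈ S, (μ {ω | τ i < X i ω}).toReal * H i := by
          have hintA : Integrable
              (fun ω => f (mask S fun i => Xtil i ω) + a * f (mask S τ)) μ :=
            hXtilS_int.add (integrable_const _)
          rw [integral_add hintA (integrable_finset_sum S fun i _ => hG_int i),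
            integral_add hXtilS_int (integrable_const _), integral_const,
            integral_finset_sum S (fun i _ => hG_int i)]
          simp only [probReal_univ, one_smul]
          congr 1
          exact Finset.sum_congr rfl fun i _ => hqH i
  have hv_le : v S ≤ u S + ∑ i ∈ S, (μ {ω | τ i < X i ω}).toReal * H i := by
    have hpw : ∀ ω, f (mask S fun i => Y i ω) ≤ f (mask S fun i => X i ω)
        + ∑ i ∈ S, Set.indicator {ω' | τ i < X i ω'} (fun _ => H i) ω := by
      intro ω
      have h0 : f (mask S fun i => Y i ω) ≤ f (mask S fun i => Xhat i ω) := by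
        apply hf_mono _ _ (hmask_nonneg S _ fun j => hY_nn j ω)
        intro j
        by_cases hj : j ∈ S
        · simp only [mask, if_pos hj]
          exact le_trans (hY j ω).2 (hXtil_le_hat j ω)
        · simp [mask, hj]
      have h1 := hpt2 ω
      linarith
    have hint : Integrable (fun ω => f (mask S fun i => X i ω)
        + ∑ i ∈ S, Set.indicator {ω' | τ i < X i ω'} (fun _ => H i) ω) μ :=
      (hu_int S).add (integrable_finset_sum S fun i _ => hindH_int i)
    have h := integral_mono (hv_int S) hint hpw
    rw [integral_add (hu_int S) (integrable_finset_sum S fun i _ => hindH_int i),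
      integral_finset_sum S (fun i _ => hindH_int i)] at h
    rw [hv S, hu S]
    refine h.trans (le_of_eq ?_)
    congr 1
    exact Finset.sum_congr rfl fun i _ => hindH_val i
  -- bound on f (mask S τ)
  have hfτ_le : f (mask S τ)
      ≤ (∑ i ∈ S, (μ {ω | τ i < X i ω}).toReal * H i) / (ε - Δ) := by
    have h1 : f (mask S τ) ≤ ∑ i ∈ S, H i := by
      refine (hsumsub S hSne τ hτ).trans ?_
      apply Finset.sum_le_sum
      intro i _
      rw [← hcstH i]
      exact hf_mono _ _ (hsingle_nonneg i _ (hτ i)) (hsingle_le i (τ i) (cst i) (hτ i) (hcst i).le)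
    have h2 : ∑ i ∈ S, H i ≤ (∑ i ∈ S, (μ {ω | τ i < X i ω}).toReal * H i) / (ε - Δ) := by
      rw [le_div_iff₀ he0, Finset.sum_mul]
      apply Finset.sum_le_sum
      intro i _
      nlinarith [hq_lb i, hH_nn i]
    linarith
  -- final arithmetic
  set A := ∫ ω, f (mask S fun i => Xtil i ω) ∂μ with hA_def
  set Q := ∑ i ∈ S, (μ {ω | τ i < X i ω}).toReal * H i with hQ_def
  have hQ_nn : 0 ≤ Q :=
    Finset.sum_nonneg fun i _ => mul_nonneg (hq_pos i).le (hH_nn i)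
  constructor
  · -- lower bound
    have hQu : Q ≤ u S / (1-ε)^(k-1) := by
      rw [le_div_iff₀ hK10]
      nlinarith [hII]
    have huu : u S ≤ u S / (1-ε)^(k-1) := by
      rw [le_div_iff₀ hK10]
      nlinarith [huS_nn, hK1le, hK10]
    have hv2 : v S ≤ 2 * (u S / (1-ε)^(k-1)) := by linarith [hv_le]
    have hv3 : (1-ε)^(k-1) * v S ≤ 2 * u S := by
      calc (1-ε)^(k-1) * v S ≤ (1-ε)^(k-1) * (2*(u S/(1-ε)^(k-1))) :=
            mul_le_mul_of_nonneg_left hv2 hK10.le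
        _ = 2 * u S := by
          have hK1ne : ((1:ℝ)-ε)^(k-1) ≠ 0 := hK10.ne'
          field_simp
    nlinarith [hv3, mul_nonneg (mul_nonneg hK10.le hvS_nn)
      (show (0:ℝ) ≤ 1 - (1 - Δ/ε) by linarith [hr1]),
      mul_nonneg hK10.le hvS_nn]
  · -- upper bound
    have hAv : A ≤ v S / (1-ε) := by
      rw [le_div_iff₀ hP0]
      nlinarith [hA_le]
    have hQv : Q ≤ v S / (1-ε)^k := by
      have h1 : Q ≤ A / (1-ε)^(k-1) := by
        rw [le_div_iff₀ hK10]
        nlinarith [hI]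
      have h2 : A / (1-ε)^(k-1) ≤ (v S/(1-ε)) / (1-ε)^(k-1) :=
        (div_le_div_iff_of_pos_right hK10).mpr hAv
      have h3 : (v S/(1-ε)) / (1-ε)^(k-1) = v S / (1-ε)^k := by
        rw [div_div, hKksplit]
      linarith
    have hfτv : f (mask S τ) ≤ (v S / (1-ε)^k) / (ε - Δ) := by
      refine hfτ_le.trans ?_
      exact (div_le_div_iff_of_pos_right he0).mpr hQv
    have hu2 : u S ≤ v S/(1-ε) + a * ((v S/(1-ε)^k)/(ε-Δ)) + v S/(1-ε)^k := by
      have haf : a * f (mask S τ) ≤ a * ((v S/(1-ε)^k)/(ε-Δ)) :=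
        mul_le_mul_of_nonneg_left hfτv ha0
      linarith [hu_le, hAv, hQv]
    have hrKk : 0 < (1-ε)^k * (1-Δ/ε) := mul_pos hKk0 hr0
    have hsplit2 : 2 * (1 + a*k/(ε-Δ)) / ((1-ε)^k * (1-Δ/ε)) * v S
        = 2 * v S / ((1-ε)^k * (1-Δ/ε))
          + 2*a*k*v S / ((ε-Δ) * ((1-ε)^k * (1-Δ/ε))) := by
      have h1 : (ε:ℝ) - Δ ≠ 0 := he0.ne'
      have h2 : ((1:ℝ)-ε)^k ≠ 0 := hKk0.ne'
      have h3 : (1:ℝ) - Δ/ε ≠ 0 := hr0.ne'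
      have h4 : (ε:ℝ) ≠ 0 := hε0.ne'
      field_simp
    have hterm1 : v S/(1-ε) + v S/(1-ε)^k ≤ 2 * v S / ((1-ε)^k * (1-Δ/ε)) := by
      have e1 : v S/(1-ε) ≤ v S/(1-ε)^k :=
        div_le_div_of_nonneg_left hvS_nn hKk0 hKkleP
      have e2 : v S/(1-ε)^k ≤ v S / ((1-ε)^k * (1-Δ/ε)) := by
        apply div_le_div_of_nonneg_left hvS_nn hrKk
        nlinarith [hKk0, hr1, hr0]
      have e3 : 2 * (v S / ((1-ε)^k*(1-Δ/ε))) = 2 * v S / ((1-ε)^k*(1-Δ/ε)) := by ring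
      linarith
    have hterm2 : a * ((v S/(1-ε)^k)/(ε-Δ))
        ≤ 2*a*k*v S / ((ε-Δ) * ((1-ε)^k * (1-Δ/ε))) := by
      have hd1 : (0:ℝ) < (1-ε)^k * (ε-Δ) := mul_pos hKk0 he0
      have hd2 : (0:ℝ) < (ε-Δ) * ((1-ε)^k * (1-Δ/ε)) := mul_pos he0 hrKk
      rw [div_div, ← mul_div_assoc]
      rw [div_le_div_iff₀ hd1 hd2]
      have h5 : (1-Δ/ε) ≤ 2*(k:ℝ) := by linarith [hkR, hr1]
      have h6 : 0 ≤ a * v S * ((1-ε)^k * (ε-Δ)) :=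
        mul_nonneg (mul_nonneg ha0 hvS_nn) (mul_pos hKk0 he0).le
      nlinarith [mul_le_mul_of_nonneg_left h5 h6]
    calc u S ≤ v S/(1-ε) + a * ((v S/(1-ε)^k)/(ε-Δ)) + v S/(1-ε)^k := hu2
      _ ≤ 2 * v S / ((1-ε)^k * (1-Δ/ε))
            + 2*a*k*v S / ((ε-Δ) * ((1-ε)^k * (1-Δ/ε))) := by linarith [hterm1, hterm2]
      _ = 2 * (1 + a*k/(ε-Δ)) / ((1-ε)^k * (1-Δ/ε)) * v S := hsplit2.symm
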